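/- Let K be a field, q ∈ K[x_1] nonconstant, R_q = K[x_1]/⟨q⟩, and let f, g, h ∈ R_q[x_2,...,x_n] be nonzero non-units with at most one of them lying in R_q, such that lcm(lm(f), lm(g)) ∈ ⟨lm(h)⟩. Then with λ := σ_q(l_h/d) where l_h = ι_q(lc(h)), d = gcd(lcm(l_f, l_g), l_h), l_f = ι_q(lc(f)), l_g = ι_q(lc(g)), one has the triangular identity λ·S(f,g) = (λ·c(g|f)/c(h|f))·S(f,h) − (λ·c(f|g)/c(h|g))·S(g,h), where for a pair (u,v) the cofactor c(v|u) := m_u·lcm(lm(u),lm(v))/lm(u) with m_u = σ_q(lcm(l_u,l_v)/l_u), and S(u,v) = c(v|u)·u − c(u|v)·v, the displayed quotients of terms being exact. -/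

import Mathlib

open MvPolynomial

/-- The leading monomial (exponent) of `f` with respect to the monomial order `m`,
taken over the coefficient ring. -/
noncomputable def mdeg {σ : Type*} (m : MonomialOrder σ) {R : Type*} [CommSemiring R]
    (f : MvPolynomial σ R) : σ →₀ ℕ :=
  m.toSyn.symm (f.support.sup fun d => m.toSyn d)

/-- The leading coefficient of `f` with respect to the monomial order `m`. -/
noncomputable def lC {σ : Type*} (m : MonomialOrder σ) {R : Type*} [CommSemiring R]
    (f : MvPolynomial σ R) : R :=
  f.coeff (mdeg m f)

/-- The leading term of `f` with respect to the monomial order `m`. -/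
noncomputable def lT {σ : Type*} (m : MonomialOrder σ) {R : Type*} [CommSemiring R]
    (f : MvPolynomial σ R) : MvPolynomial σ R :=
  monomial (mdeg m f) (lC m f)

/-- `d` is a greatest common divisor of `a` and `b` (gcd's are unique up to units). -/
def IsGcd {α : Type*} [CommMonoid α] (d a b : α) : Prop :=
  d ∣ a ∧ d ∣ b ∧ ∀ e, e ∣ a → e ∣ b → e ∣ d

/-- `l` is a least common multiple of `a` and `b` (lcm's are unique up to units). -/
def IsLcm {α : Type*} [CommMonoid α] (l a b : α) : Prop :=
  a ∣ l ∧ b ∣ l ∧ ∀ e, a ∣ e → b ∣ e → l ∣ e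


lemma lC_ne_zero {σ : Type*} (m : MonomialOrder σ) {R : Type*} [CommSemiring R]
    {f : MvPolynomial σ R} (hf : f ≠ 0) : lC m f ≠ 0 := by
  have hs : f.support.Nonempty := by
    rw [Finset.nonempty_iff_ne_empty]
    simpa [MvPolynomial.support_eq_empty] using hf
  obtain ⟨i, hi, he⟩ := Finset.exists_mem_eq_sup f.support hs (fun d => m.toSyn d)
  have hmi : mdeg m f = i := by rw [mdeg, he]; exact m.toSyn.symm_apply_apply i
  rw [lC, hmi]
  exact MvPolynomial.mem_support_iff.mp hi

/-- **Triangular identity of S-polynomials over a PQR `R_q = K[x₁]/⟨q⟩`.**  For nonzero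
non-units `f, g, h` with at most one of them in `R_q` and `lcm(lm f, lm g) ∈ ⟨lm h⟩`,
with `λ = σ_q(l_h/d)`, `d = gcd(lcm(l_f,l_g), l_h)` (the `l`'s being the canonical
lifts of the leading coefficients), one has
`λ·S(f,g) = (λ·c(g|f)/c(h|f))·S(f,h) − (λ·c(f|g)/c(h|g))·S(g,h)`, the displayed
quotients of terms being exact. -/
theorem triangular_identity_PQR {σ K : Type*} [Field K] (mo : MonomialOrder σ)
    (q : Polynomial K) (hq : 0 < q.degree)
    (f g h : MvPolynomial σ (Polynomial K ⧸ Ideal.span {q}))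
    (hf0 : f ≠ 0) (hfu : ¬ IsUnit f)
    (hg0 : g ≠ 0) (hgu : ¬ IsUnit g)
    (hh0 : h ≠ 0) (hhu : ¬ IsUnit h)
    (hatmost : ¬ (f ∈ Set.range (C : (Polynomial K ⧸ Ideal.span {q}) →
        MvPolynomial σ (Polynomial K ⧸ Ideal.span {q})) ∧
        g ∈ Set.range (C : (Polynomial K ⧸ Ideal.span {q}) →
        MvPolynomial σ (Polynomial K ⧸ Ideal.span {q}))) ∧
      ¬ (f ∈ Set.range (C : (Polynomial K ⧸ Ideal.span {q}) →
        MvPolynomial σ (Polynomial K ⧸ Ideal.span {q})) ∧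
        h ∈ Set.range (C : (Polynomial K ⧸ Ideal.span {q}) →
        MvPolynomial σ (Polynomial K ⧸ Ideal.span {q}))) ∧
      ¬ (g ∈ Set.range (C : (Polynomial K ⧸ Ideal.span {q}) →
        MvPolynomial σ (Polynomial K ⧸ Ideal.span {q})) ∧
        h ∈ Set.range (C : (Polynomial K ⧸ Ideal.span {q}) →
        MvPolynomial σ (Polynomial K ⧸ Ideal.span {q}))))
    (hdvd : mdeg mo h ≤ mdeg mo f ⊔ mdeg mo g)
    (γfg γfh γgh : σ →₀ ℕ)
    (hγfg : γfg = mdeg mo f ⊔ mdeg mo g)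
    (hγfh : γfh = mdeg mo f ⊔ mdeg mo h)
    (hγgh : γgh = mdeg mo g ⊔ mdeg mo h)
    (lf lg lh : Polynomial K)
    (hlf : lf.degree < q.degree ∧ Ideal.Quotient.mk (Ideal.span {q}) lf = lC mo f)
    (hlg : lg.degree < q.degree ∧ Ideal.Quotient.mk (Ideal.span {q}) lg = lC mo g)
    (hlh : lh.degree < q.degree ∧ Ideal.Quotient.mk (Ideal.span {q}) lh = lC mo h)
    (Mfg Mfh Mgh ufg vfg ufh vfh ugh vgh d lam : Polynomial K)
    (hMfg : IsLcm Mfg lf lg) (hufg : Mfg = lf * ufg) (hvfg : Mfg = lg * vfg)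
    (hMfh : IsLcm Mfh lf lh) (hufh : Mfh = lf * ufh) (hvfh : Mfh = lh * vfh)
    (hMgh : IsLcm Mgh lg lh) (hugh : Mgh = lg * ugh) (hvgh : Mgh = lh * vgh)
    (hd : IsGcd d Mfg lh) (hlam : lh = d * lam) :
    γfh ≤ γfg ∧ γgh ≤ γfg ∧
    ∃ w1 w2 : Polynomial K,
      lam * Mfg = w1 * Mfh ∧ lam * Mfg = w2 * Mgh ∧
      C (Ideal.Quotient.mk (Ideal.span {q}) lam) *
          (C (Ideal.Quotient.mk (Ideal.span {q}) ufg) * monomial (γfg - mdeg mo f) 1 * f -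
            C (Ideal.Quotient.mk (Ideal.span {q}) vfg) * monomial (γfg - mdeg mo g) 1 * g) =
        C (Ideal.Quotient.mk (Ideal.span {q}) w1) * monomial (γfg - γfh) 1 *
            (C (Ideal.Quotient.mk (Ideal.span {q}) ufh) * monomial (γfh - mdeg mo f) 1 * f -
              C (Ideal.Quotient.mk (Ideal.span {q}) vfh) * monomial (γfh - mdeg mo h) 1 * h) -
          C (Ideal.Quotient.mk (Ideal.span {q}) w2) * monomial (γfg - γgh) 1 *
            (C (Ideal.Quotient.mk (Ideal.span {q}) ugh) * monomial (γgh - mdeg mo g) 1 * g -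
              C (Ideal.Quotient.mk (Ideal.span {q}) vgh) * monomial (γgh - mdeg mo h) 1 * h) := by
  -- nonzero lifts of leading coefficients
  have hlf0 : lf ≠ 0 := fun h' => lC_ne_zero mo hf0 (by rw [← hlf.2, h', map_zero])
  have hlg0 : lg ≠ 0 := fun h' => lC_ne_zero mo hg0 (by rw [← hlg.2, h', map_zero])
  have hlh0 : lh ≠ 0 := fun h' => lC_ne_zero mo hh0 (by rw [← hlh.2, h', map_zero])
  -- order facts
  have hfh_le : γfh ≤ γfg := by rw [hγfh, hγfg]; exact sup_le le_sup_left hdvd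
  have hgh_le : γgh ≤ γfg := by rw [hγgh, hγfg]; exact sup_le le_sup_right hdvd
  have hmf_fh : mdeg mo f ≤ γfh := by rw [hγfh]; exact le_sup_left
  have hmh_fh : mdeg mo h ≤ γfh := by rw [hγfh]; exact le_sup_right
  have hmg_gh : mdeg mo g ≤ γgh := by rw [hγgh]; exact le_sup_left
  have hmh_gh : mdeg mo h ≤ γgh := by rw [hγgh]; exact le_sup_right
  -- divisibilities
  have hd1 : Mfh ∣ lam * Mfg := by
    refine hMfh.2.2 _ ⟨lam * ufg, by rw [hufg]; ring⟩ ?_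
    obtain ⟨e, he⟩ := hd.1
    exact ⟨e, by rw [he, hlam]; ring⟩
  have hd2 : Mgh ∣ lam * Mfg := by
    refine hMgh.2.2 _ ⟨lam * vfg, by rw [hvfg]; ring⟩ ?_
    obtain ⟨e, he⟩ := hd.1
    exact ⟨e, by rw [he, hlam]; ring⟩
  obtain ⟨w1, hw1⟩ := hd1
  obtain ⟨w2, hw2⟩ := hd2
  rw [mul_comm Mfh w1] at hw1
  rw [mul_comm Mgh w2] at hw2
  refine ⟨hfh_le, hgh_le, w1, w2, hw1, hw2, ?_⟩
  -- coefficient identities in Polynomial K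
  have c1 : lam * ufg = w1 * ufh := by
    apply mul_left_cancel₀ hlf0
    have h' := hw1
    rw [hufg, hufh] at h'
    linear_combination h'
  have c2 : lam * vfg = w2 * ugh := by
    apply mul_left_cancel₀ hlg0
    have h' := hw2
    rw [hvfg, hugh] at h'
    linear_combination h'
  have c3 : w1 * vfh = w2 * vgh := by
    apply mul_left_cancel₀ hlh0
    have h' := hw1.symm.trans hw2
    rw [hvfh, hvgh] at h'
    linear_combination h'
  -- exponent identities
  have e1 : (γfg - γfh) + (γfh - mdeg mo f) = γfg - mdeg mo f :=
    tsub_add_tsub_cancel hfh_le hmf_fh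
  have e2 : (γfg - γfh) + (γfh - mdeg mo h) = γfg - mdeg mo h :=
    tsub_add_tsub_cancel hfh_le hmh_fh
  have e3 : (γfg - γgh) + (γgh - mdeg mo g) = γfg - mdeg mo g :=
    tsub_add_tsub_cancel hgh_le hmg_gh
  have e4 : (γfg - γgh) + (γgh - mdeg mo h) = γfg - mdeg mo h :=
    tsub_add_tsub_cancel hgh_le hmh_gh
  -- images of coefficient identities
  set π := Ideal.Quotient.mk (Ideal.span {q}) with hπ
  have pc1 : π lam * π ufg = π w1 * π ufh := by rw [← map_mul, ← map_mul, c1]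
  have pc2 : π lam * π vfg = π w2 * π ugh := by rw [← map_mul, ← map_mul, c2]
  have pc3 : π w1 * π vfh = π w2 * π vgh := by rw [← map_mul, ← map_mul, c3]
  simp only [C_mul_monomial, mul_one, mul_sub, ← mul_assoc, monomial_mul]
  have hA : monomial (γfg - γfh) (π w1) * monomial (γfh - mdeg mo f) (π ufh) =
      C (π lam) * monomial (γfg - mdeg mo f) (π ufg) := by
    rw [monomial_mul, e1, C_mul_monomial, pc1]
  have hB : monomial (γfg - γfh) (π w1) * monomial (γfh - mdeg mo h) (π vfh) =
      monomial (γfg - γgh) (π w2) * monomial (γgh - mdeg mo h) (π vgh) := by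
    rw [monomial_mul, monomial_mul, e2, e4, pc3]
  have hC : monomial (γfg - γgh) (π w2) * monomial (γgh - mdeg mo g) (π ugh) =
      C (π lam) * monomial (γfg - mdeg mo g) (π vfg) := by
    rw [monomial_mul, e3, C_mul_monomial, pc2]
  linear_combination (-f) * hA + h * hB + g * hC
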